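/- Let P ∈ Ã be monic in a of degree d+h with h ≥ 1, congruent to a^{d+h} modulo b·Ã, and with initial form in (a,b) of degree d equal to ρ·b^q·P_{d−q} with ρ ∈ C*, 0 ≤ q ≤ d, and P_{d−q} homogeneous monic in a of degree d−q. Then there exist Z, Q ∈ Ã, polynomials in a of degrees q+h and at most d−q−1 respectively, with (a,b)-valuations at least q+1 and d−q+1 respectively, such that (ρ·b^q + Z)·(P_{d−q} + Q) = P in Ã. -/

import Mathlib

/- We model the relevant elements of the completion `Ã` of `ℂ⟨a,b⟩`
(relation `ab − ba = b²`) — namely the polynomials in `a` with left coefficients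
in `ℂ⟦b⟧` — by `Polynomial ℂ⟦X⟧`, where the polynomial variable stands for `a`
and the power series variable for `b`, together with the (noncommutative)
multiplication determined by `a·c(b) = c(b)·a + b²·c'(b)`. -/

/-- Left multiplication by `a` : `a·(c(b)·a^k) = c(b)·a^{k+1} + b²·c'(b)·a^k`. -/
noncomputable def aMul (p : Polynomial (PowerSeries ℂ)) : Polynomial (PowerSeries ℂ) :=
  Polynomial.X * p +
    p.sum fun k c =>
      Polynomial.C ((PowerSeries.X : PowerSeries ℂ) ^ 2 * PowerSeries.derivativeFun c) *
        Polynomial.X ^ k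

/-- The multiplication of `Ã` on polynomials in `a` with `ℂ⟦b⟧` coefficients :
`(Σ_k c_k(b)·a^k)·Q = Σ_k c_k(b)·(a^k·Q)`. -/
noncomputable def abMul (p q : Polynomial (PowerSeries ℂ)) : Polynomial (PowerSeries ℂ) :=
  p.sum fun k c => Polynomial.C c * (aMul^[k] q)

namespace SF

open Polynomial PowerSeries Finset

noncomputable def ar (p : Polynomial (PowerSeries ℂ)) (k m : ℕ) : ℂ :=
  PowerSeries.coeff m (p.coeff k)

noncomputable def arZ (p : Polynomial (PowerSeries ℂ)) (k m : ℤ) : ℂ :=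
  if 0 ≤ k ∧ 0 ≤ m then ar p k.toNat m.toNat else 0

def asc (t i : ℕ) : ℕ := ∏ r ∈ Finset.range i, (t + r)

noncomputable def ascC (t : ℤ) (i : ℕ) : ℂ := ∏ r ∈ Finset.range i, ((t : ℂ) + r)

lemma asc_zero (t : ℕ) : asc t 0 = 1 := by simp [asc]

lemma asc_succ (t i : ℕ) : asc t (i+1) = asc t i * (t + i) := by
  simp [asc, Finset.prod_range_succ]

lemma ascC_zero (t : ℤ) : ascC t 0 = 1 := by simp [ascC]

lemma ascC_succ (t : ℤ) (i : ℕ) : ascC t (i+1) = ascC t i * ((t : ℂ) + i) := by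
  simp [ascC, Finset.prod_range_succ]

lemma ascC_coe (t i : ℕ) : ascC (t : ℤ) i = (asc t i : ℂ) := by
  unfold ascC asc
  push_cast
  rfl

lemma coeff_aMul (p : Polynomial (PowerSeries ℂ)) (k : ℕ) :
    (aMul p).coeff k = (if k = 0 then 0 else p.coeff (k-1))
      + (PowerSeries.X : PowerSeries ℂ)^2 * PowerSeries.derivativeFun (p.coeff k) := by
  rw [aMul, Polynomial.coeff_add]
  congr 1
  · cases k with
    | zero => simp
    | succ n => simp [Polynomial.coeff_X_mul]
  · rw [Polynomial.sum_def, Polynomial.finset_sum_coeff]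
    simp only [Polynomial.coeff_C_mul_X_pow]
    rw [Finset.sum_ite_eq p.support k
      (fun j => (PowerSeries.X : PowerSeries ℂ)^2 * PowerSeries.derivativeFun (p.coeff j))]
    split_ifs with hk
    · rfl
    · rw [Polynomial.notMem_support_iff.mp hk]
      have : PowerSeries.derivativeFun (0 : PowerSeries ℂ) = 0 := by
        exact map_zero (PowerSeries.derivative ℂ)
      rw [this, mul_zero]

lemma ar_aMul (p : Polynomial (PowerSeries ℂ)) (k m : ℕ) :
    ar (aMul p) k m = (if 1 ≤ k then ar p (k-1) m else 0)
      + (if 1 ≤ m then ((m-1 : ℕ) : ℂ) * ar p k (m-1) else 0) := by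
  rw [ar, coeff_aMul, map_add]
  congr 1
  · rcases Nat.eq_zero_or_pos k with hk | hk
    · simp [hk]
    · rw [if_neg (by omega), if_pos (by omega)]; rfl
  · rw [PowerSeries.coeff_X_pow_mul']
    rcases Nat.lt_or_ge m 2 with hm | hm
    · interval_cases m <;> simp [PowerSeries.coeff_derivativeFun]
    · rw [if_pos (show 2 ≤ m by omega), if_pos (show 1 ≤ m by omega)]
      change PowerSeries.coeff (m-2) (PowerSeries.derivative ℂ (p.coeff k)) = _
      rw [PowerSeries.coeff_derivativeFun]
      have h1 : m - 2 + 1 = m - 1 := by omega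
      rw [h1]
      have h2 : ((m - 2 : ℕ) : ℂ) + 1 = ((m - 1 : ℕ) : ℂ) := by
        have := congrArg (fun n : ℕ => (n : ℂ)) h1
        push_cast at this
        simpa using this
      rw [h2, mul_comm]
      rfl

lemma arZ_aMul (p : Polynomial (PowerSeries ℂ)) (k m : ℤ) :
    arZ (aMul p) k m = arZ p (k-1) m + ((m : ℂ) - 1) * arZ p k (m-1) := by
  by_cases hk : 0 ≤ k
  · by_cases hm : 0 ≤ m
    · rw [arZ, if_pos ⟨hk, hm⟩, ar_aMul]
      congr 1
      · by_cases h1 : 1 ≤ k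
        · rw [if_pos (show 1 ≤ k.toNat by omega), arZ, if_pos (show 0 ≤ k - 1 ∧ 0 ≤ m by omega)]
          congr 1 <;> omega
        · rw [if_neg (show ¬ 1 ≤ k.toNat by omega), arZ, if_neg (by omega)]
      · by_cases h1 : 1 ≤ m
        · rw [if_pos (show 1 ≤ m.toNat by omega), arZ, if_pos (show 0 ≤ k ∧ 0 ≤ m - 1 by omega)]
          have h3 : ((m.toNat - 1 : ℕ) : ℂ) = (m : ℂ) - 1 := by
            have h4 : ((m.toNat - 1 : ℕ) : ℤ) = m - 1 := by omega
            calc ((m.toNat - 1 : ℕ) : ℂ) = (((m.toNat - 1 : ℕ) : ℤ) : ℂ) := by push_cast; ring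
            _ = ((m - 1 : ℤ) : ℂ) := by rw [h4]
            _ = (m : ℂ) - 1 := by push_cast; ring
          rw [h3]
          congr 2
          omega
        · have hm0 : m = 0 := by omega
          subst hm0
          rw [if_neg (show ¬ 1 ≤ (0:ℤ).toNat by simp), arZ, if_neg (by omega)]
          ring
    · rw [arZ, if_neg (by omega), arZ, if_neg (by omega), arZ, if_neg (by omega)]
      ring
  · rw [arZ, if_neg (by omega), arZ, if_neg (by omega), arZ, if_neg (by omega)]
    ring

lemma arZ_aMul_iterate (p : Polynomial (PowerSeries ℂ)) (j : ℕ) (k m : ℤ) :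
    arZ (aMul^[j] p) k m
      = ∑ i ∈ Finset.range (j+1),
        (j.choose i : ℂ) * ascC (m - i) i * arZ p (k + i - j) (m - i) := by
  induction j generalizing k m with
  | zero => simp [ascC_zero]
  | succ j ih =>
    rw [Function.iterate_succ_apply', arZ_aMul, ih, ih, Finset.mul_sum]
    conv_rhs => rw [Finset.sum_range_succ']
    have hsplit : ∀ i ∈ Finset.range (j+1),
        (((j+1).choose (i+1) : ℂ)) * ascC (m - ((i+1:ℕ):ℤ)) (i+1) *
            arZ p (k + ((i+1:ℕ):ℤ) - ((j+1:ℕ):ℤ)) (m - ((i+1:ℕ):ℤ))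
        = ((j.choose (i+1) : ℂ)) * ascC (m - ((i+1:ℕ):ℤ)) (i+1) *
            arZ p (k + ((i+1:ℕ):ℤ) - ((j+1:ℕ):ℤ)) (m - ((i+1:ℕ):ℤ))
          + ((j.choose i : ℂ)) * ascC (m - ((i+1:ℕ):ℤ)) (i+1) *
            arZ p (k + ((i+1:ℕ):ℤ) - ((j+1:ℕ):ℤ)) (m - ((i+1:ℕ):ℤ)) := by
      intro i _
      rw [Nat.choose_succ_succ]
      push_cast
      ring
    rw [Finset.sum_congr rfl hsplit, Finset.sum_add_distrib]
    have h2 : ∑ i ∈ Finset.range (j+1),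
        ((m : ℂ) - 1) * ((j.choose i : ℂ) * ascC (m - 1 - i) i * arZ p (k + i - j) (m - 1 - i))
        = ∑ i ∈ Finset.range (j+1),
          ((j.choose i : ℂ)) * ascC (m - ((i+1:ℕ):ℤ)) (i+1) *
            arZ p (k + ((i+1:ℕ):ℤ) - ((j+1:ℕ):ℤ)) (m - ((i+1:ℕ):ℤ)) := by
      apply Finset.sum_congr rfl
      intro i _
      have e1 : m - ((i+1:ℕ):ℤ) = m - 1 - i := by push_cast; ring
      have e2 : k + ((i+1:ℕ):ℤ) - ((j+1:ℕ):ℤ) = k + i - j := by push_cast; ring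
      rw [e1, e2, ascC_succ]
      have e3 : ((m - 1 - (i:ℤ) : ℤ) : ℂ) + i = (m : ℂ) - 1 := by push_cast; ring
      rw [e3]
      ring
    rw [h2]
    have e1 : ∑ i ∈ Finset.range (j+1),
        (j.choose i : ℂ) * ascC (m - (i:ℤ)) i * arZ p (k - 1 + (i:ℤ) - (j:ℤ)) (m - (i:ℤ))
        = ∑ i ∈ Finset.range (j+1),
        (j.choose i : ℂ) * ascC (m - (i:ℤ)) i * arZ p (k + (i:ℤ) - ((j+1:ℕ):ℤ)) (m - (i:ℤ)) := by
      apply Finset.sum_congr rfl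
      intro i _
      congr 2
      push_cast; ring
    rw [e1]
    have e2 : ∑ i ∈ Finset.range ((j+1)+1),
        (j.choose i : ℂ) * ascC (m - (i:ℤ)) i * arZ p (k + (i:ℤ) - ((j+1:ℕ):ℤ)) (m - (i:ℤ))
        = ∑ i ∈ Finset.range (j+1),
        (j.choose i : ℂ) * ascC (m - (i:ℤ)) i * arZ p (k + (i:ℤ) - ((j+1:ℕ):ℤ)) (m - (i:ℤ)) := by
      rw [Finset.sum_range_succ]
      simp [Nat.choose_succ_self]
    rw [← e2, Finset.sum_range_succ'
      (fun i => (j.choose i : ℂ) * ascC (m - (i:ℤ)) i * arZ p (k + (i:ℤ) - ((j+1:ℕ):ℤ)) (m - (i:ℤ)))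
      (j+1)]
    have e4 : ((j+1).choose 0 : ℂ) * ascC (m - ((0:ℕ):ℤ)) 0 *
        arZ p (k + ((0:ℕ):ℤ) - ((j+1:ℕ):ℤ)) (m - ((0:ℕ):ℤ))
        = (j.choose 0 : ℂ) * ascC (m - ((0:ℕ):ℤ)) 0 *
        arZ p (k + ((0:ℕ):ℤ) - ((j+1:ℕ):ℤ)) (m - ((0:ℕ):ℤ)) := by
      norm_num
    rw [e4]
    ring

/-- the triple-sum product form (copy of pE's body, for the bridge test) -/
lemma coeff_sumCX (g : ℕ → PowerSeries ℂ) (N k : ℕ) :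
    (∑ j ∈ Finset.range N, Polynomial.C (g j) * Polynomial.X ^ j).coeff k
      = if k < N then g k else 0 := by
  rw [Polynomial.finset_sum_coeff]
  simp only [Polynomial.coeff_C_mul_X_pow]
  rw [Finset.sum_ite_eq (Finset.range N) k g]
  simp only [Finset.mem_range]

lemma ar_iterate (V : Polynomial (PowerSeries ℂ)) (j k μ : ℕ) :
    ar (aMul^[j] V) k μ = ∑ i ∈ Finset.range (j+1),
      (if j ≤ k+i ∧ i ≤ μ then
        (j.choose i : ℂ) * (asc (μ-i) i : ℂ) * ar V (k+i-j) (μ-i) else 0) := by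
  have hZ := arZ_aMul_iterate V j (k : ℤ) (μ : ℤ)
  rw [arZ, if_pos ⟨Int.natCast_nonneg k, Int.natCast_nonneg μ⟩] at hZ
  simp only [Int.toNat_natCast] at hZ
  rw [hZ]
  refine Finset.sum_congr rfl fun i hi => ?_
  by_cases hc : j ≤ k+i ∧ i ≤ μ
  · rw [if_pos hc, arZ, if_pos (by constructor <;> omega)]
    have e1 : ((k:ℤ)+i-j).toNat = k+i-j := by omega
    have e2 : ((μ:ℤ)-i).toNat = μ-i := by omega
    rw [e1, e2]
    have e3 : (μ:ℤ)-(i:ℤ) = ((μ-i : ℕ) : ℤ) := by omega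
    rw [e3, ascC_coe]
  · rw [if_neg hc, arZ, if_neg (by omega)]
    ring

lemma ar_abMul (N : ℕ) (U V : Polynomial (PowerSeries ℂ)) (hU : U.natDegree ≤ N) (k m : ℕ) :
    ar (abMul U V) k m
      = ∑ j ∈ Finset.range (N+1), ∑ i ∈ Finset.range (j+1), ∑ s ∈ Finset.range (m+1),
          (if j ≤ k+i ∧ i+s ≤ m then
            (j.choose i : ℂ) * (asc (m-s-i) i : ℂ) * ar U j s * ar V (k+i-j) (m-s-i)
          else 0) := by
  have h1 : (abMul U V).coeff k
      = ∑ j ∈ Finset.range (N+1), U.coeff j * ((aMul^[j] V).coeff k) := by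
    rw [abMul, Polynomial.sum_over_range' U (by intro n; simp) (N+1) (by omega),
      Polynomial.finset_sum_coeff]
    refine Finset.sum_congr rfl fun j _ => ?_
    rw [Polynomial.coeff_C_mul]
  rw [ar, h1, map_sum]
  refine Finset.sum_congr rfl fun j hj => ?_
  rw [PowerSeries.coeff_mul, Finset.Nat.sum_antidiagonal_eq_sum_range_succ_mk]
  have h2 : ∀ s ∈ Finset.range (m+1),
      (PowerSeries.coeff s) (U.coeff j) * (PowerSeries.coeff (m-s)) ((aMul^[j] V).coeff k)
      = ∑ i ∈ Finset.range (j+1),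
          (if j ≤ k+i ∧ i+s ≤ m then
            (j.choose i : ℂ) * (asc (m-s-i) i : ℂ) * ar U j s * ar V (k+i-j) (m-s-i)
          else 0) := by
    intro s hs
    have hs' : s ≤ m := by
      have := Finset.mem_range.mp hs
      omega
    rw [show (PowerSeries.coeff (m-s)) ((aMul^[j] V).coeff k) = ar (aMul^[j] V) k (m-s)
        from rfl,
      ar_iterate, Finset.mul_sum]
    refine Finset.sum_congr rfl fun i hi => ?_
    by_cases hc : j ≤ k+i ∧ i ≤ m-s
    · rw [if_pos hc, if_pos (by omega)]
      rw [show (PowerSeries.coeff s) (U.coeff j) = ar U j s from rfl]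
      ring
    · rw [if_neg hc, if_neg (by omega), mul_zero]
  rw [Finset.sum_congr rfl h2, Finset.sum_comm]


variable (D q h : ℕ) (ρ : ℂ) (w : ℕ → ℂ) (pT : ℕ → ℕ → ℂ)

lemma lex3 {x y : ℕ × ℕ × ℕ}
    (hl : x.1 < y.1 ∨ (x.1 = y.1 ∧ (x.2.1 < y.2.1 ∨ (x.2.1 = y.2.1 ∧ x.2.2 < y.2.2)))) :
    Prod.Lex (· < ·) (Prod.Lex (· < ·) (· < ·)) x y := by
  obtain ⟨a, b, c⟩ := x
  obtain ⟨a', b', c'⟩ := y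
  rcases hl with h | ⟨rfl, h | ⟨rfl, h⟩⟩
  · exact Prod.Lex.left _ _ h
  · exact Prod.Lex.right _ (Prod.Lex.left _ _ h)
  · exact Prod.Lex.right _ (Prod.Lex.right _ h)

mutual

noncomputable def zz : ℕ → ℕ → ℂ
  | j, s =>
    if hj : j ≤ q + h ∧ q + 1 ≤ j + s then
      pT (j+D) s - T3t (j+D) s -
        ∑ j' ∈ Finset.range (q+h+1), ∑ i ∈ Finset.range (j'+1),
          (if hg : j+1 ≤ j' ∧ j' ≤ j+s ∧ i+j ≤ j' ∧ j' ≤ j+D+i then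
            (j'.choose i : ℂ) * (asc (j'-j-i) i : ℂ) * w (j+D+i-j') * zz j' (j+s-j')
          else 0)
    else 0
  termination_by j s => ((j+s+D : ℕ), (0:ℕ), q+h+1-j)
  decreasing_by all_goals exact lex3 (by dsimp only; omega)

noncomputable def qq : ℕ → ℕ → ℂ
  | k, t =>
    if hk : k+1 ≤ D ∧ D+1 ≤ k+t then
      ρ⁻¹ * (pT k (t+q) - T3t k (t+q) - STf (k+t+q) k)
    else 0
  termination_by k t => ((k+t+q : ℕ), (1:ℕ), 0)
  decreasing_by all_goals exact lex3 (by dsimp only; omega)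

noncomputable def STf : ℕ → ℕ → ℂ
  | n, k =>
    ∑ j ∈ Finset.range (q+h+1), ∑ i ∈ Finset.range (j+1),
      if hg : j ≤ k+i ∧ k+i ≤ j+D ∧ j+D ≤ n then
        (j.choose i : ℂ) * (asc (D+j-k-i) i : ℂ) * w (k+i-j) * zz j (n-D-j)
      else 0
  termination_by n k => ((n : ℕ), (0:ℕ), q+h+2)
  decreasing_by all_goals exact lex3 (by dsimp only; omega)

noncomputable def T3t : ℕ → ℕ → ℂ
  | k, m =>
    ∑ j ∈ Finset.range (q+h+1), ∑ i ∈ Finset.range (j+1), ∑ s ∈ Finset.range (m+1),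
      if hg : j ≤ k+i ∧ i+s ≤ m ∧ q+1 ≤ j+s ∧ j+s+D+1 ≤ k+m then
        (j.choose i : ℂ) * (asc (m-s-i) i : ℂ) * zz j s * qq (k+i-j) (m-s-i)
      else 0
  termination_by k m => ((k+m : ℕ), (0:ℕ), 0)
  decreasing_by all_goals exact lex3 (by dsimp only; omega)

end

lemma zz_supp_val {j s : ℕ} (hv : j + s ≤ q) : zz D q h ρ w pT j s = 0 := by
  rw [zz, dif_neg (by omega)]

lemma zz_supp_deg {j s : ℕ} (hv : q + h < j) : zz D q h ρ w pT j s = 0 := by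
  rw [zz, dif_neg (by omega)]

lemma qq_supp_val {k t : ℕ} (hv : k + t ≤ D) : qq D q h ρ w pT k t = 0 := by
  rw [qq, dif_neg (by omega)]

lemma qq_supp_deg {k t : ℕ} (hv : D ≤ k) : qq D q h ρ w pT k t = 0 := by
  rw [qq, dif_neg (by omega)]

/-- the graded product of two coefficient arrays, as a triple sum -/
noncomputable def pE (f g : ℕ → ℕ → ℂ) (k m : ℕ) : ℂ :=
  ∑ j ∈ Finset.range (q+h+1), ∑ i ∈ Finset.range (j+1), ∑ s ∈ Finset.range (m+1),
    if j ≤ k+i ∧ i+s ≤ m then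
      (j.choose i : ℂ) * (asc (m-s-i) i : ℂ) * f j s * g (k+i-j) (m-s-i)
    else 0

noncomputable def uρ : ℕ → ℕ → ℂ := fun a b => if a = 0 ∧ b = q then ρ else 0

noncomputable def pd : ℕ → ℕ → ℂ := fun a b => if a ≤ D ∧ a + b = D then w a else 0


lemma pE_add_left (f₁ f₂ g : ℕ → ℕ → ℂ) (k m : ℕ) :
    pE q h (fun a b => f₁ a b + f₂ a b) g k m = pE q h f₁ g k m + pE q h f₂ g k m := by
  unfold pE
  rw [← Finset.sum_add_distrib]
  refine Finset.sum_congr rfl fun j _ => ?_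
  rw [← Finset.sum_add_distrib]
  refine Finset.sum_congr rfl fun i _ => ?_
  rw [← Finset.sum_add_distrib]
  refine Finset.sum_congr rfl fun s _ => ?_
  split_ifs <;> ring

lemma pE_add_right (f g₁ g₂ : ℕ → ℕ → ℂ) (k m : ℕ) :
    pE q h f (fun a b => g₁ a b + g₂ a b) k m = pE q h f g₁ k m + pE q h f g₂ k m := by
  unfold pE
  rw [← Finset.sum_add_distrib]
  refine Finset.sum_congr rfl fun j _ => ?_
  rw [← Finset.sum_add_distrib]
  refine Finset.sum_congr rfl fun i _ => ?_
  rw [← Finset.sum_add_distrib]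
  refine Finset.sum_congr rfl fun s _ => ?_
  split_ifs <;> ring

lemma pE_rho (g : ℕ → ℕ → ℂ) (k m : ℕ) :
    pE q h (uρ q ρ) g k m = if q ≤ m then ρ * g k (m-q) else 0 := by
  unfold pE uρ
  rw [Finset.sum_eq_single 0]
  · rw [Finset.sum_range_one]
    have step : ∀ s ∈ Finset.range (m+1),
        (if 0 ≤ k+0 ∧ 0+s ≤ m then
          ((Nat.choose 0 0 : ℕ) : ℂ) * (asc (m-s-0) 0 : ℂ) *
            (if (0:ℕ) = 0 ∧ s = q then ρ else 0) * g (k+0-0) (m-s-0)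
        else 0) = if s = q then ρ * g k (m-q) else 0 := by
      intro s hs
      have hsm : s ≤ m := by simpa using Nat.lt_succ_iff.mp (Finset.mem_range.mp hs)
      rw [if_pos (by omega)]
      by_cases hsq : s = q
      · subst hsq
        rw [if_pos ⟨rfl, rfl⟩, if_pos rfl]
        simp [asc]
      · rw [if_neg (by tauto), if_neg hsq]
        ring
    rw [Finset.sum_congr rfl step, Finset.sum_ite_eq' (Finset.range (m+1)) q
      (fun _ => ρ * g k (m-q))]
    simp only [Finset.mem_range]
    congr 1
    simp only [eq_iff_iff]
    omega
  · intro j _ hjne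
    refine Finset.sum_eq_zero fun i _ => Finset.sum_eq_zero fun s _ => ?_
    split_ifs with hc h2
    · exact absurd h2.1 hjne
    · ring
    · rfl
  · intro habs
    exact absurd (Finset.mem_range.mpr (by omega)) habs

lemma pE_zz_pd (k m : ℕ) :
    pE q h (zz D q h ρ w pT) (pd D w) k m = STf D q h ρ w pT (k+m) k := by
  rw [STf]
  unfold pE pd
  refine Finset.sum_congr rfl fun j hj => ?_
  refine Finset.sum_congr rfl fun i hi => ?_
  by_cases hg : j ≤ k+i ∧ k+i ≤ j+D ∧ j+D ≤ k+m
  · rw [dif_pos hg]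
    rw [Finset.sum_eq_single (k+m-D-j)]
    · rw [if_pos (by omega), if_pos (show k+i-j ≤ D ∧ (k+i-j)+(m-(k+m-D-j)-i) = D by omega)]
      have e1 : m-(k+m-D-j)-i = D+j-k-i := by omega
      rw [e1]
      ring
    · intro s hs hne
      split_ifs with hc h2
      · exact absurd h2 (by omega)
      · ring
      · rfl
    · intro habs
      exact absurd (Finset.mem_range.mpr (by omega)) habs
  · rw [dif_neg hg]
    refine Finset.sum_eq_zero fun s hs => ?_
    split_ifs with hc h2
    · exact absurd h2 (by omega)
    · ring
    · rfl

lemma pE_zz_qq (k m : ℕ) :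
    pE q h (zz D q h ρ w pT) (qq D q h ρ w pT) k m = T3t D q h ρ w pT k m := by
  rw [T3t]
  unfold pE
  refine Finset.sum_congr rfl fun j hj => ?_
  refine Finset.sum_congr rfl fun i hi => ?_
  refine Finset.sum_congr rfl fun s hs => ?_
  by_cases hc : j ≤ k+i ∧ i+s ≤ m
  · by_cases hex : q+1 ≤ j+s ∧ j+s+D+1 ≤ k+m
    · rw [if_pos hc, dif_pos ⟨hc.1, hc.2, hex.1, hex.2⟩]
    · rw [if_pos hc, dif_neg (by omega)]
      rcases not_and_or.mp hex with hx | hx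
      · rw [zz_supp_val D q h ρ w pT (by omega)]
        ring
      · rw [qq_supp_val D q h ρ w pT (show (k+i-j)+(m-s-i) ≤ D by omega)]
        ring
  · rw [if_neg hc, dif_neg (by omega)]


lemma STf_eq (hwD : w D = 1)
    (hphigh : ∀ a b : ℕ, D+q+h < a → pT a b = 0)
    (n k : ℕ) (hk : D ≤ k) (hkn : k ≤ n) (hn : D+q+1 ≤ n) :
    STf D q h ρ w pT n k = pT k (n-k) - T3t D q h ρ w pT k (n-k) := by
  by_cases hbig : D+q+h < k
  · have h1 : STf D q h ρ w pT n k = 0 := by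
      rw [STf]
      refine Finset.sum_eq_zero fun j hj => Finset.sum_eq_zero fun i hi => ?_
      have hj' := Finset.mem_range.mp hj
      rw [dif_neg (by omega)]
    have h2 : T3t D q h ρ w pT k (n-k) = 0 := by
      rw [T3t]
      refine Finset.sum_eq_zero fun j hj => Finset.sum_eq_zero fun i hi =>
        Finset.sum_eq_zero fun s hs => ?_
      have hj' := Finset.mem_range.mp hj
      by_cases hg : j ≤ k+i ∧ i+s ≤ n-k ∧ q+1 ≤ j+s ∧ j+s+D+1 ≤ k+(n-k)
      · rw [dif_pos hg, qq_supp_deg D q h ρ w pT (show D ≤ k+i-j by omega)]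
        ring
      · rw [dif_neg hg]
    rw [h1, h2, hphigh k (n-k) hbig]
    ring
  · rw [STf]
    have claim : ∀ j ∈ Finset.range (q+h+1),
        (∑ i ∈ Finset.range (j+1),
          if hg : j ≤ k+i ∧ k+i ≤ j+D ∧ j+D ≤ n then
            (j.choose i : ℂ) * (asc (D+j-k-i) i : ℂ) * w (k+i-j) * zz D q h ρ w pT j (n-D-j)
          else 0)
        = (∑ i ∈ Finset.range (j+1),
          if hg : k-D+1 ≤ j ∧ j ≤ k-D+(n-k) ∧ i+(k-D) ≤ j ∧ j ≤ k-D+D+i then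
            (j.choose i : ℂ) * (asc (j-(k-D)-i) i : ℂ) * w (k-D+D+i-j) *
              zz D q h ρ w pT j (k-D+(n-k)-j)
          else 0)
          + (if j = k-D then zz D q h ρ w pT (k-D) (n-k) else 0) := by
      intro j hj
      have hj' := Finset.mem_range.mp hj
      rcases lt_trichotomy j (k-D) with hlt | heq | hgt
      · have l0 : (∑ i ∈ Finset.range (j+1),
            if hg : j ≤ k+i ∧ k+i ≤ j+D ∧ j+D ≤ n then
              (j.choose i : ℂ) * (asc (D+j-k-i) i : ℂ) * w (k+i-j) * zz D q h ρ w pT j (n-D-j)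
            else 0) = 0 := by
          refine Finset.sum_eq_zero fun i hi => ?_
          have hi' := Finset.mem_range.mp hi
          rw [dif_neg (by omega)]
        have r0 : (∑ i ∈ Finset.range (j+1),
            if hg : k-D+1 ≤ j ∧ j ≤ k-D+(n-k) ∧ i+(k-D) ≤ j ∧ j ≤ k-D+D+i then
              (j.choose i : ℂ) * (asc (j-(k-D)-i) i : ℂ) * w (k-D+D+i-j) *
                zz D q h ρ w pT j (k-D+(n-k)-j)
            else 0) = 0 := by
          refine Finset.sum_eq_zero fun i hi => ?_
          rw [dif_neg (by omega)]
        rw [l0, r0, if_neg (by omega)]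
        ring
      · have r0 : (∑ i ∈ Finset.range (j+1),
            if hg : k-D+1 ≤ j ∧ j ≤ k-D+(n-k) ∧ i+(k-D) ≤ j ∧ j ≤ k-D+D+i then
              (j.choose i : ℂ) * (asc (j-(k-D)-i) i : ℂ) * w (k-D+D+i-j) *
                zz D q h ρ w pT j (k-D+(n-k)-j)
            else 0) = 0 := by
          refine Finset.sum_eq_zero fun i hi => ?_
          rw [dif_neg (by omega)]
        have l1 : (∑ i ∈ Finset.range (j+1),
            if hg : j ≤ k+i ∧ k+i ≤ j+D ∧ j+D ≤ n then
              (j.choose i : ℂ) * (asc (D+j-k-i) i : ℂ) * w (k+i-j) * zz D q h ρ w pT j (n-D-j)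
            else 0) = zz D q h ρ w pT (k-D) (n-k) := by
          rw [Finset.sum_eq_single 0]
          · rw [dif_pos (by omega)]
            have e1 : k+0-j = D := by omega
            have e2 : n-D-j = n-k := by omega
            rw [e1, e2, hwD, heq]
            simp [asc]
          · intro i hi hine
            rw [dif_neg (by omega)]
          · intro habs
            exact absurd (Finset.mem_range.mpr (by omega)) habs
        rw [l1, r0, if_pos heq]
        ring
      · rw [if_neg (by omega), add_zero]
        refine Finset.sum_congr rfl fun i hi => ?_
        by_cases hgg : j ≤ k+i ∧ k+i ≤ j+D ∧ j+D ≤ n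
        · rw [dif_pos hgg, dif_pos (by omega)]
          have e1 : j-(k-D)-i = D+j-k-i := by omega
          have e2 : k-D+D+i-j = k+i-j := by omega
          have e3 : k-D+(n-k)-j = n-D-j := by omega
          rw [e1, e2, e3]
        · rw [dif_neg hgg, dif_neg (by omega)]
    rw [Finset.sum_congr rfl claim, Finset.sum_add_distrib,
      Finset.sum_ite_eq' (Finset.range (q+h+1)) (k-D) (fun _ => zz D q h ρ w pT (k-D) (n-k)),
      if_pos (Finset.mem_range.mpr (by omega))]
    rw [zz, dif_pos (show k-D ≤ q+h ∧ q+1 ≤ (k-D)+(n-k) by omega)]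
    have e4 : k-D+D = k := by omega
    rw [e4]
    ring


theorem main_id (hwD : w D = 1) (hρ : ρ ≠ 0)
    (hlow : ∀ a b : ℕ, a+b < D+q → pT a b = 0)
    (hini : ∀ a b : ℕ, a+b = D+q → pT a b = ρ * (if a ≤ D then w a else 0))
    (hphigh : ∀ a b : ℕ, D+q+h < a → pT a b = 0)
    (k m : ℕ) :
    pE q h (fun a b => uρ q ρ a b + zz D q h ρ w pT a b)
          (fun a b => pd D w a b + qq D q h ρ w pT a b) k m = pT k m := by
  rw [pE_add_left q h (uρ q ρ) (zz D q h ρ w pT)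
      (fun a b => pd D w a b + qq D q h ρ w pT a b) k m,
    pE_add_right q h (uρ q ρ) (pd D w) (qq D q h ρ w pT) k m,
    pE_add_right q h (zz D q h ρ w pT) (pd D w) (qq D q h ρ w pT) k m,
    pE_rho q h ρ (pd D w) k m, pE_rho q h ρ (qq D q h ρ w pT) k m,
    pE_zz_pd D q h ρ w pT k m, pE_zz_qq D q h ρ w pT k m]
  have hT3low : k+m ≤ D+q → T3t D q h ρ w pT k m = 0 := by
    intro hn
    rw [T3t]
    refine Finset.sum_eq_zero fun j hj => Finset.sum_eq_zero fun i hi =>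
      Finset.sum_eq_zero fun s hs => ?_
    rw [dif_neg (by omega)]
  rcases lt_trichotomy (k+m) (D+q) with hn | hn | hn
  · have h1 : (if q ≤ m then ρ * pd D w k (m-q) else 0) = 0 := by
      split_ifs with hqm
      · simp only [pd]
        rw [if_neg (by omega)]
        ring
      · rfl
    have h2 : (if q ≤ m then ρ * qq D q h ρ w pT k (m-q) else 0) = 0 := by
      split_ifs with hqm
      · rw [qq_supp_val D q h ρ w pT (by omega)]
        ring
      · rfl
    have h3 : STf D q h ρ w pT (k+m) k = 0 := by
      rw [STf]
      refine Finset.sum_eq_zero fun j hj => Finset.sum_eq_zero fun i hi => ?_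
      by_cases hg : j ≤ k+i ∧ k+i ≤ j+D ∧ j+D ≤ k+m
      · rw [dif_pos hg, zz_supp_val D q h ρ w pT (by omega)]
        ring
      · rw [dif_neg hg]
    rw [h1, h2, h3, hT3low (by omega), hlow k m hn]
    ring
  · have h1 : (if q ≤ m then ρ * pd D w k (m-q) else 0) = ρ * (if k ≤ D then w k else 0) := by
      by_cases hkD : k ≤ D
      · rw [if_pos (show q ≤ m by omega), if_pos hkD]
        simp only [pd]
        rw [if_pos ⟨hkD, by omega⟩]
      · rw [if_neg hkD]
        split_ifs with hqm
        · simp only [pd]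
          rw [if_neg (by omega)]
        · ring
    have h2 : (if q ≤ m then ρ * qq D q h ρ w pT k (m-q) else 0) = 0 := by
      split_ifs with hqm
      · rw [qq_supp_val D q h ρ w pT (by omega)]
        ring
      · rfl
    have h3 : STf D q h ρ w pT (k+m) k = 0 := by
      rw [STf]
      refine Finset.sum_eq_zero fun j hj => Finset.sum_eq_zero fun i hi => ?_
      by_cases hg : j ≤ k+i ∧ k+i ≤ j+D ∧ j+D ≤ k+m
      · rw [dif_pos hg, zz_supp_val D q h ρ w pT (by omega)]
        ring
      · rw [dif_neg hg]
    rw [h1, h2, h3, hT3low (by omega), hini k m hn]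
    ring
  · have h1 : (if q ≤ m then ρ * pd D w k (m-q) else 0) = 0 := by
      split_ifs with hqm
      · simp only [pd]
        rw [if_neg (by omega)]
        ring
      · rfl
    rw [h1]
    by_cases hkD : k < D
    · rw [if_pos (show q ≤ m by omega), qq, dif_pos (show k+1 ≤ D ∧ D+1 ≤ k+(m-q) by omega)]
      have e1 : m-q+q = m := by omega
      have e2 : k+(m-q)+q = k+m := by omega
      rw [e1, e2, ← mul_assoc, mul_inv_cancel₀ hρ, one_mul]
      ring
    · have h2 : (if q ≤ m then ρ * qq D q h ρ w pT k (m-q) else 0) = 0 := by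
        split_ifs with hqm
        · rw [qq_supp_deg D q h ρ w pT (by omega)]
          ring
        · rfl
      have h3 := STf_eq D q h ρ w pT hwD hphigh (k+m) k (by omega) (by omega) (by omega)
      have e : k+m-k = m := by omega
      rw [e] at h3
      rw [h2, h3]
      ring


lemma qq_b0 (k : ℕ) : qq D q h ρ w pT k 0 = 0 := by
  rcases le_or_gt D k with hc | hc
  · exact qq_supp_deg D q h ρ w pT hc
  · exact qq_supp_val D q h ρ w pT (by omega)

lemma T3t_b0 (k : ℕ) : T3t D q h ρ w pT k 0 = 0 := by
  rw [T3t]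
  refine Finset.sum_eq_zero fun j hj => Finset.sum_eq_zero fun i hi =>
    Finset.sum_eq_zero fun s hs => ?_
  by_cases hg : j ≤ k+i ∧ i+s ≤ 0 ∧ q+1 ≤ j+s ∧ j+s+D+1 ≤ k+0
  · rw [dif_pos hg]
    have e : (0:ℕ)-s-i = 0 := by omega
    rw [e, qq_b0]
    ring
  · rw [dif_neg hg]

lemma zz_top (hh : 1 ≤ h) (hlead : pT (q+h+D) 0 = 1) :
    zz D q h ρ w pT (q+h) 0 = 1 := by
  rw [zz, dif_pos (by omega : q+h ≤ q+h ∧ q+1 ≤ q+h+0)]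
  have hinner : (∑ j' ∈ Finset.range (q+h+1), ∑ i ∈ Finset.range (j'+1),
      (if hg : q+h+1 ≤ j' ∧ j' ≤ q+h+0 ∧ i+(q+h) ≤ j' ∧ j' ≤ q+h+D+i then
        (j'.choose i : ℂ) * (asc (j'-(q+h)-i) i : ℂ) * w (q+h+D+i-j') *
          zz D q h ρ w pT j' (q+h+0-j')
      else 0)) = 0 := by
    refine Finset.sum_eq_zero fun j' hj' => Finset.sum_eq_zero fun i hi => ?_
    rw [dif_neg (by omega)]
  rw [hinner, T3t_b0, hlead]
  ring


end SF


open SF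

/-- **Second factorization theorem.**  Let `P ∈ Ã` be monic in `a` of degree `d+h`,
`h ≥ 1`, congruent to `a^{d+h}` modulo `b·Ã`, whose initial form in `(a,b)` has
degree `d` and equals `ρ·b^q·P_{d−q}` with `ρ ∈ ℂ*`, `0 ≤ q ≤ d`, and `P_{d−q}`
homogeneous of degree `d−q`, monic in `a` (with coefficients `w_k`,
`w_{d−q} = 1`).  Then there exist `Z, Q ∈ Ã`, polynomials in `a` of degrees
`q+h` and at most `d−q−1`, with `(a,b)`-valuations at least `q+1` and `d−q+1`
respectively, such that `(ρ·b^q + Z)·(P_{d−q} + Q) = P` in `Ã`. -/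
theorem second_factorization
    (d h q : ℕ) (hh : 1 ≤ h) (hq : q ≤ d) (ρ : ℂ) (hρ : ρ ≠ 0)
    (P : Polynomial (PowerSeries ℂ))
    (hmonic : P.Monic) (hdeg : P.natDegree = d + h)
    -- `P ≡ a^{d+h}` modulo `b·Ã`
    (hmod : ∀ k < d + h, PowerSeries.constantCoeff (P.coeff k) = 0)
    (w : ℕ → ℂ) (hw : w (d - q) = 1)
    (Pd : Polynomial (PowerSeries ℂ))
    (hPd : Pd = ∑ k ∈ Finset.range (d - q + 1),
      Polynomial.C (PowerSeries.C (w k) * PowerSeries.X ^ (d - q - k)) * Polynomial.X ^ k)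
    -- the initial form of `P` in `(a,b)` is `ρ·b^q·P_{d−q}`, of total degree `d` :
    (hval : ∀ k m : ℕ, m + k < d → PowerSeries.coeff m (P.coeff k) = 0)
    (hinit : ∀ k ≤ d, PowerSeries.coeff (d - k) (P.coeff k)
      = ρ * (if k ≤ d - q then w k else 0)) :
    ∃ Z Q : Polynomial (PowerSeries ℂ),
      Z.natDegree = q + h ∧ Q.natDegree ≤ d - q - 1 ∧
      -- valuation of `Z` in `(a,b)` is at least `q+1`
      (∀ k m : ℕ, m + k ≤ q → PowerSeries.coeff m (Z.coeff k) = 0) ∧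
      -- valuation of `Q` in `(a,b)` is at least `d−q+1`
      (∀ k m : ℕ, m + k ≤ d - q → PowerSeries.coeff m (Q.coeff k) = 0) ∧
      abMul (Polynomial.C (PowerSeries.C ρ * PowerSeries.X ^ q) + Z) (Pd + Q) = P := by
  classical
  set pT : ℕ → ℕ → ℂ := fun a b => PowerSeries.coeff b (P.coeff a) with hpT
  have hlow : ∀ a b : ℕ, a + b < (d-q) + q → pT a b = 0 := fun a b hab =>
    hval a b (by omega)
  have hini : ∀ a b : ℕ, a + b = (d-q) + q → pT a b = ρ * (if a ≤ d - q then w a else 0) := by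
    intro a b hab
    have ha : a ≤ d := by omega
    have hb : b = d - a := by omega
    subst hb
    exact hinit a ha
  have hphigh : ∀ a b : ℕ, (d-q) + q + h < a → pT a b = 0 := by
    intro a b hab
    show PowerSeries.coeff b (P.coeff a) = 0
    rw [Polynomial.coeff_eq_zero_of_natDegree_lt (by omega), map_zero]
  have hlead : pT (q+h+(d-q)) 0 = 1 := by
    show PowerSeries.coeff 0 (P.coeff (q+h+(d-q))) = 1
    have e : q+h+(d-q) = P.natDegree := by omega
    rw [e, hmonic.coeff_natDegree]
    simp
  set Z : Polynomial (PowerSeries ℂ) := ∑ j ∈ Finset.range (q+h+1),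
    Polynomial.C (PowerSeries.mk (zz (d-q) q h ρ w pT j)) * Polynomial.X ^ j with hZdef
  set Qp : Polynomial (PowerSeries ℂ) := ∑ k ∈ Finset.range (d-q),
    Polynomial.C (PowerSeries.mk (qq (d-q) q h ρ w pT k)) * Polynomial.X ^ k with hQdef
  have hZcoeff : ∀ a : ℕ, Z.coeff a
      = if a < q+h+1 then PowerSeries.mk (zz (d-q) q h ρ w pT a) else 0 := by
    intro a
    rw [hZdef]
    exact coeff_sumCX _ _ a
  have hQcoeff : ∀ a : ℕ, Qp.coeff a
      = if a < d-q then PowerSeries.mk (qq (d-q) q h ρ w pT a) else 0 := by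
    intro a
    rw [hQdef]
    exact coeff_sumCX _ _ a
  have hZdeg : Z.natDegree ≤ q + h := by
    apply Polynomial.natDegree_le_iff_coeff_eq_zero.mpr
    intro N hN
    rw [hZcoeff, if_neg (by omega)]
  refine ⟨Z, Qp, ?_, ?_, ?_, ?_, ?_⟩
  · -- natDegree of Z
    have h1 : Z.coeff (q+h) ≠ 0 := by
      rw [hZcoeff, if_pos (by omega)]
      intro h0
      have h2 := congrArg (PowerSeries.coeff 0) h0
      rw [PowerSeries.coeff_mk, map_zero] at h2
      rw [zz_top (d-q) q h ρ w pT hh hlead] at h2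
      exact one_ne_zero h2
    exact le_antisymm hZdeg (Polynomial.le_natDegree_of_ne_zero h1)
  · -- natDegree of Q
    apply Polynomial.natDegree_le_iff_coeff_eq_zero.mpr
    intro N hN
    rw [hQcoeff, if_neg (by omega)]
  · -- valuation of Z
    intro k m hkm
    rw [hZcoeff]
    split_ifs with hc
    · rw [PowerSeries.coeff_mk]
      exact zz_supp_val (d-q) q h ρ w pT (by omega)
    · rw [map_zero]
  · -- valuation of Q
    intro k m hkm
    rw [hQcoeff]
    split_ifs with hc
    · rw [PowerSeries.coeff_mk]
      exact qq_supp_val (d-q) q h ρ w pT (by omega)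
    · rw [map_zero]
  · -- the factorization
    have hUdeg : (Polynomial.C (PowerSeries.C ρ * PowerSeries.X ^ q) + Z).natDegree ≤ q+h := by
      refine le_trans (Polynomial.natDegree_add_le _ _) (max_le ?_ hZdeg)
      rw [Polynomial.natDegree_C]
      omega
    have harU : ar (Polynomial.C (PowerSeries.C ρ * PowerSeries.X ^ q) + Z)
        = fun a b => uρ q ρ a b + zz (d-q) q h ρ w pT a b := by
      funext a b
      show PowerSeries.coeff b
        ((Polynomial.C (PowerSeries.C ρ * PowerSeries.X ^ q) + Z).coeff a) = _
      rw [Polynomial.coeff_add, Polynomial.coeff_C, hZcoeff, map_add]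
      congr 1
      · by_cases ha : a = 0
        · rw [if_pos ha, PowerSeries.coeff_C_mul, PowerSeries.coeff_X_pow]
          simp only [uρ, ha, true_and]
          split_ifs <;> simp
        · rw [if_neg ha, map_zero]
          simp only [uρ]
          rw [if_neg (by tauto)]
      · split_ifs with hc
        · rw [PowerSeries.coeff_mk]
        · rw [map_zero, zz_supp_deg (d-q) q h ρ w pT (by omega)]
    have harV : ar (Pd + Qp)
        = fun a b => pd (d-q) w a b + qq (d-q) q h ρ w pT a b := by
      funext a b
      show PowerSeries.coeff b ((Pd + Qp).coeff a) = _
      rw [Polynomial.coeff_add, hPd, coeff_sumCX, hQcoeff, map_add]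
      congr 1
      · split_ifs with hc
        · rw [PowerSeries.coeff_C_mul, PowerSeries.coeff_X_pow]
          simp only [pd]
          by_cases hb : b = d-q-a
          · rw [if_pos hb, if_pos (by omega)]
            simp [hb]
          · rw [if_neg hb, if_neg (by omega)]
            simp
        · rw [map_zero]
          simp only [pd]
          rw [if_neg (by omega)]
      · split_ifs with hc
        · rw [PowerSeries.coeff_mk]
        · rw [map_zero, qq_supp_deg (d-q) q h ρ w pT (by omega)]
    refine Polynomial.ext fun k => PowerSeries.ext fun m => ?_
    calc PowerSeries.coeff m
          ((abMul (Polynomial.C (PowerSeries.C ρ * PowerSeries.X ^ q) + Z) (Pd + Qp)).coeff k)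
        = pE q h (ar (Polynomial.C (PowerSeries.C ρ * PowerSeries.X ^ q) + Z))
            (ar (Pd + Qp)) k m := by
          unfold pE
          exact ar_abMul (q+h) _ _ hUdeg k m
      _ = pT k m := by
          rw [harU, harV]
          exact main_id (d-q) q h ρ w pT hw hρ hlow hini hphigh k m
      _ = PowerSeries.coeff m (P.coeff k) := rfl
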